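/- Under the Haar-type hypotheses, for every integer m ≥ 1 the polynomial function g(α) := (1/(m+1)) · e₀ᵀ (P(α))^{m+1} e₀ is Fréchet differentiable on Fin n → ℝ with gradient ∇g(α) = (P(α))^m e₀ for every α (i.e., the error term E_{m+1}(α) e₀ of Lemma 2.2 vanishes identically for Haar-type expansions). -/

import Mathlib

open Matrix

/-- For Haar-type expansions the error term `E_{m+1}(α) e₀` of Lemma 2.2 vanishes
identically: the polynomial function `g(α) := (1/(m+1)) · e₀ᵀ (P α)^{m+1} e₀` is
(Fréchet) differentiable everywhere with gradient `∇g(α) = (P α)^m e₀`. -/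
theorem haar_sg_energy_gradient {n : ℕ} [NeZero n]
    (M : Fin n → Matrix (Fin n) (Fin n) ℝ)
    (hMsymm : ∀ k, (M k).IsSymm) (hM0 : M 0 = 1)
    (P : (Fin n → ℝ) → Matrix (Fin n) (Fin n) ℝ)
    (hP : ∀ uh, P uh = ∑ k, uh k • M k)
    (hsym : ∀ uh wh : Fin n → ℝ, (P uh).mulVec wh = (P wh).mulVec uh)
    (e0 : Fin n → ℝ) (he0 : e0 = Pi.single 0 1)
    (H : Matrix (Fin n) (Fin n) ℝ) (hH : Hᵀ * H = 1)
    (hdiag : ∀ k, (Hᵀ * M k * H).IsDiag)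
    (m : ℕ) (hm : 1 ≤ m)
    (g : (Fin n → ℝ) → ℝ)
    (hg : ∀ α, g α = (1 / ((m : ℝ) + 1)) * (e0 ⬝ᵥ (P α ^ (m + 1)).mulVec e0)) :
    ∀ α : Fin n → ℝ, DifferentiableAt ℝ g α ∧
      ∀ h : Fin n → ℝ, fderiv ℝ g α h = ((P α ^ m).mulVec e0) ⬝ᵥ h := by
  classical
  intro α
  set d : Fin n → Fin n → ℝ := fun k i => (Hᵀ * M k * H) i i with hd
  have hHH : H * Hᵀ = 1 := mul_eq_one_comm.mp hH
  have hMk : ∀ k, M k = H * Matrix.diagonal (d k) * Hᵀ := by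
    intro k
    have h1 : Matrix.diagonal (d k) = Hᵀ * M k * H := (hdiag k).diagonal_diag
    rw [h1]
    calc M k = H * Hᵀ * M k * (H * Hᵀ) := by rw [hHH]; simp
      _ = H * (Hᵀ * M k * H) * Hᵀ := by simp only [Matrix.mul_assoc]
  set lam : (Fin n → ℝ) → Fin n → ℝ := fun β i => ∑ k, β k * d k i with hlam
  have hsumdiag : ∀ β : Fin n → ℝ,
      ∑ k, β k • Matrix.diagonal (d k) = Matrix.diagonal (lam β) := by
    intro β; ext i j
    by_cases hij : i = j
    · subst hij
      simp [Matrix.sum_apply, hlam]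
    · simp [Matrix.sum_apply, Matrix.diagonal_apply_ne _ hij]
  have hPd : ∀ β : Fin n → ℝ, P β = H * Matrix.diagonal (lam β) * Hᵀ := by
    intro β
    calc P β = ∑ k, β k • (H * Matrix.diagonal (d k) * Hᵀ) := by
          rw [hP]; exact Finset.sum_congr rfl fun k _ => by rw [← hMk k]
      _ = ∑ k, H * (β k • Matrix.diagonal (d k)) * Hᵀ := by
          refine Finset.sum_congr rfl fun k _ => ?_
          rw [Matrix.mul_smul, Matrix.smul_mul]
      _ = H * (∑ k, β k • Matrix.diagonal (d k)) * Hᵀ := by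
          simp only [Finset.mul_sum, Finset.sum_mul]
      _ = H * Matrix.diagonal (lam β) * Hᵀ := by rw [hsumdiag]
  have hconj : ∀ f f' : Fin n → ℝ,
      (H * Matrix.diagonal f * Hᵀ) * (H * Matrix.diagonal f' * Hᵀ)
        = H * Matrix.diagonal (fun i => f i * f' i) * Hᵀ := by
    intro f f'
    rw [← Matrix.diagonal_mul_diagonal]
    simp only [Matrix.mul_assoc]
    rw [← Matrix.mul_assoc Hᵀ H, hH, Matrix.one_mul]
  have hpow : ∀ (β : Fin n → ℝ) (N : ℕ),
      P β ^ N = H * Matrix.diagonal (fun i => lam β i ^ N) * Hᵀ := by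
    intro β N
    induction N with
    | zero =>
        have h1 : (fun i : Fin n => lam β i ^ 0) = fun _ => (1 : ℝ) := by
          funext i; simp
        rw [pow_zero, h1, Matrix.diagonal_one, Matrix.mul_one, hHH]
    | succ N ih =>
        have h1 : (fun i : Fin n => lam β i ^ N * lam β i)
            = fun i => lam β i ^ (N + 1) := by
          funext i; rw [pow_succ]
        rw [pow_succ, ih, hPd β, hconj, h1]
  set v : Fin n → ℝ := Hᵀ *ᵥ e0 with hv
  have hmulvec : ∀ f : Fin n → ℝ,
      (H * Matrix.diagonal f * Hᵀ) *ᵥ e0 = H *ᵥ (fun i => f i * v i) := by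
    intro f
    rw [← Matrix.mulVec_mulVec, ← Matrix.mulVec_mulVec, ← hv]
    have hdf : Matrix.diagonal f *ᵥ v = fun i => f i * v i := by
      ext i; exact Matrix.mulVec_diagonal f v i
    rw [hdf]
  have hquad : ∀ (β : Fin n → ℝ) (N : ℕ),
      e0 ⬝ᵥ (P β ^ N) *ᵥ e0 = ∑ i, (v i * v i) * lam β i ^ N := by
    intro β N
    rw [hpow β N, hmulvec, Matrix.dotProduct_mulVec, ← Matrix.mulVec_transpose]
    simp only [dotProduct]
    refine Finset.sum_congr rfl fun i _ => ?_
    show v i * (lam β i ^ N * v i) = (v i * v i) * lam β i ^ N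
    ring
  have hPe0 : P e0 = 1 := by
    rw [hP, he0]
    rw [Finset.sum_eq_single 0 (fun b _ hb => by simp [Pi.single_eq_of_ne hb])
      (by simp)]
    simp [hM0]
  have hPh : ∀ h : Fin n → ℝ, P h *ᵥ e0 = h := by
    intro h
    rw [hsym h e0, hPe0, Matrix.one_mulVec]
  have hRHS : ∀ h : Fin n → ℝ,
      ((P α ^ m) *ᵥ e0) ⬝ᵥ h = ∑ i, (v i * v i) * (lam α i ^ m * lam h i) := by
    intro h
    conv_lhs => rw [← hPh h]
    rw [hpow α m, hmulvec, hPd h, hmulvec, Matrix.dotProduct_mulVec,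
      ← Matrix.mulVec_transpose, Matrix.mulVec_mulVec, hH, Matrix.one_mulVec]
    simp only [dotProduct]
    refine Finset.sum_congr rfl fun i _ => ?_
    show (lam α i ^ m * v i) * (lam h i * v i) = (v i * v i) * (lam α i ^ m * lam h i)
    ring
  -- calculus part
  set L : Fin n → (Fin n → ℝ) →L[ℝ] ℝ :=
    fun i => ∑ k, d k i • (ContinuousLinearMap.proj k : (Fin n → ℝ) →L[ℝ] ℝ) with hL
  have hterm : ∀ k i : Fin n, HasFDerivAt (fun β : Fin n → ℝ => β k * d k i)
      (d k i • (ContinuousLinearMap.proj k : (Fin n → ℝ) →L[ℝ] ℝ)) α :=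
    fun k i => ((ContinuousLinearMap.proj (R := ℝ) (φ := fun _ : Fin n => ℝ)
      k).hasFDerivAt (x := α)).mul_const (d k i)
  have hlamF : ∀ i, HasFDerivAt (fun β => lam β i) (L i) α := by
    intro i
    exact HasFDerivAt.fun_sum (fun k _ => hterm k i)
  have hpowF : ∀ i, HasFDerivAt (fun β => lam β i ^ (m + 1))
      (((((m : ℝ)) + 1) * lam α i ^ m) • L i) α := by
    intro i
    have hc : (((m : ℝ) + 1) * lam α i ^ m)
        = ((m + 1 : ℕ) : ℝ) * lam α i ^ (m + 1 - 1) := by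
      push_cast; simp
    rw [hc]
    exact (hasDerivAt_pow (m + 1) (lam α i)).comp_hasFDerivAt α (hlamF i)
  have hgeq : g = fun β => (1 / ((m : ℝ) + 1)) * ∑ i, (v i * v i) * lam β i ^ (m + 1) := by
    funext β; rw [hg β, hquad β (m + 1)]
  have hF : HasFDerivAt
      (fun β => (1 / ((m : ℝ) + 1)) * ∑ i, (v i * v i) * lam β i ^ (m + 1))
      ((1 / ((m : ℝ) + 1)) •
        ∑ i, (v i * v i) • ((((m : ℝ) + 1) * lam α i ^ m) • L i)) α :=
    (HasFDerivAt.fun_sum (fun i _ => (hpowF i).const_mul (v i * v i))).const_mul _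
  rw [hgeq]
  refine ⟨hF.differentiableAt, ?_⟩
  intro h
  rw [hF.fderiv, hRHS h]
  have hm1 : ((m : ℝ) + 1) ≠ 0 := by positivity
  have hLh : ∀ i, L i h = lam h i := by
    intro i
    simp [hL, hlam, mul_comm]
  simp only [ContinuousLinearMap.smul_apply, ContinuousLinearMap.coe_sum',
    Finset.sum_apply, smul_eq_mul]
  rw [Finset.mul_sum]
  refine Finset.sum_congr rfl fun i _ => ?_
  rw [hLh i]
  field_simp
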